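/- Let α ∈ (0,1], N ∈ ℕ, and 0 ≤ n ≤ 2N. Then the n×n moment matrix M_n with entries (M_n)_{j,k} = (1/2πi)∮_γ z^{j+k}·(z+1)^N(z+α)^N/z^{2N} dz (γ a positively oriented circle around 0), i.e. (M_n)_{j,k} equals the coefficient of z^{2N-1-j-k} in (z+1)^N(z+α)^N, is invertible. -/

import Mathlib

open Polynomial Finset

private lemma neg_interleave (p : ℝ[X]) (hp : p ≠ 0) :
    (p.roots.toFinset.filter (· < (0:ℝ))).card ≤
      (((derivative p).roots.toFinset.filter (· < (0:ℝ))) \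
        (p.roots.toFinset.filter (· < (0:ℝ)))).card + 1 := by
  rcases eq_or_ne (derivative p) 0 with hp' | hp'
  · rw [eq_C_of_derivative_eq_zero hp', roots_C, Multiset.toFinset_zero, Finset.filter_empty,
      Finset.card_empty]
    exact Nat.zero_le _
  refine Finset.card_le_diff_of_interleaved fun x hx y hy hxy hxy' => ?_
  rw [Finset.mem_filter, Multiset.mem_toFinset, mem_roots hp] at hx hy
  obtain ⟨z, hz1, hz2⟩ := exists_deriv_eq_zero hxy p.continuousOn (hx.1.trans hy.1.symm)
  refine ⟨z, ?_, hz1⟩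
  rw [Finset.mem_filter, Multiset.mem_toFinset, mem_roots hp', IsRoot, ← p.deriv]
  exact ⟨hz2, lt_trans hz1.2 hy.2⟩

private lemma neg_card_roots_le_derivative (p : ℝ[X]) :
    Multiset.card (p.roots.filter (· < (0:ℝ))) ≤
      Multiset.card ((derivative p).roots.filter (· < (0:ℝ))) + 1 := by
  rcases eq_or_ne (derivative p) 0 with hp' | hp'
  · rcases eq_or_ne p 0 with rfl | hp
    · simp
    · rw [eq_C_of_derivative_eq_zero hp', roots_C]
      simp
  have hp : p ≠ 0 := ne_of_apply_ne derivative (by rwa [derivative_zero])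
  set s := p.roots.toFinset.filter (· < (0:ℝ)) with hs
  set t := (derivative p).roots.toFinset.filter (· < (0:ℝ)) with ht
  have hsfin : (p.roots.filter (· < (0:ℝ))).toFinset = s := by
    rw [hs, Multiset.toFinset_filter]
  have htfin : ((derivative p).roots.filter (· < (0:ℝ))).toFinset = t := by
    rw [ht, Multiset.toFinset_filter]
  have hcard1 : Multiset.card (p.roots.filter (· < (0:ℝ))) = ∑ x ∈ s, p.roots.count x := by
    rw [← hsfin, ← Multiset.toFinset_sum_count_eq]
    refine Finset.sum_congr rfl fun x hx => ?_
    rw [hsfin, hs, Finset.mem_filter] at hx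
    exact Multiset.count_filter_of_pos hx.2
  have hcard2 : Multiset.card ((derivative p).roots.filter (· < (0:ℝ)))
      = ∑ x ∈ t, (derivative p).roots.count x := by
    rw [← htfin, ← Multiset.toFinset_sum_count_eq]
    refine Finset.sum_congr rfl fun x hx => ?_
    rw [htfin, ht, Finset.mem_filter] at hx
    exact Multiset.count_filter_of_pos hx.2
  calc
    Multiset.card (p.roots.filter (· < (0:ℝ))) = ∑ x ∈ s, p.roots.count x := hcard1
    _ = ∑ x ∈ s, (p.roots.count x - 1 + 1) := by
      refine Finset.sum_congr rfl fun x hx => (tsub_add_cancel_of_le ?_).symm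
      rw [hs, Finset.mem_filter, Multiset.mem_toFinset] at hx
      exact Nat.succ_le_iff.2 (Multiset.count_pos.2 hx.1)
    _ = (∑ x ∈ s, (p.rootMultiplicity x - 1)) + s.card := by
      simp only [Finset.sum_add_distrib, Finset.card_eq_sum_ones, count_roots]
    _ ≤ (∑ x ∈ s, (derivative p).rootMultiplicity x) + ((t \ s).card + 1) :=
      add_le_add
        (Finset.sum_le_sum fun x _ =>
          rootMultiplicity_sub_one_le_derivative_rootMultiplicity _ _)
        (neg_interleave p hp)
    _ ≤ (∑ x ∈ s, (derivative p).roots.count x) +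
          ((∑ x ∈ t \ s, (derivative p).roots.count x) + 1) := by
      simp only [← count_roots]
      refine add_le_add_right (add_le_add_left ((Finset.card_eq_sum_ones _).trans_le ?_) _) _
      refine Finset.sum_le_sum fun x hx => Nat.succ_le_iff.2 ?_
      rw [count_roots, ← count_roots, Multiset.count_pos, ← Multiset.mem_toFinset]
      exact Multiset.mem_toFinset.2 (Multiset.mem_toFinset.1
        (Finset.mem_filter.1 (Finset.mem_sdiff.1 hx).1).1)
    _ = (∑ x ∈ s ∪ (t \ s), (derivative p).roots.count x) + 1 := by
      rw [← add_assoc, ← Finset.sum_union Finset.disjoint_sdiff]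
    _ = (∑ x ∈ t, (derivative p).roots.count x) + 1 := by
      congr 1
      rw [Finset.union_sdiff_self_eq_union]
      refine (Finset.sum_subset Finset.subset_union_right fun x hx hx2 => ?_).symm
      rcases Finset.mem_union.1 hx with hxs | hxt
      · rw [Multiset.count_eq_zero]
        intro hmem
        exact hx2 (Finset.mem_filter.2 ⟨Multiset.mem_toFinset.2 hmem,
          (Finset.mem_filter.1 hxs).2⟩)
      · exact absurd hxt hx2
    _ = Multiset.card ((derivative p).roots.filter (· < (0:ℝ))) + 1 := by rw [hcard2]

private lemma const_case (q : ℝ[X]) (hq : q ≠ 0) (h0 : q.natDegree = 0) :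
    Multiset.card (q.roots.filter (· < (0:ℝ))) + 1 ≤ q.support.card := by
  have hroots : q.roots = 0 := by
    conv_lhs => rw [Polynomial.eq_C_of_natDegree_eq_zero h0]
    exact roots_C _
  rw [hroots]
  simpa using Finset.card_pos.2 (Polynomial.support_nonempty.2 hq)

private lemma descartes_neg : ∀ (d : ℕ) (q : ℝ[X]), q.natDegree ≤ d → q ≠ 0 →
    Multiset.card (q.roots.filter (· < (0:ℝ))) + 1 ≤ q.support.card := by
  intro d
  induction d with
  | zero => exact fun q hd hq => const_case q hq (Nat.le_zero.1 hd)
  | succ d ih =>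
    intro q hd hq
    rcases eq_or_ne q.natDegree 0 with h0 | h0
    · exact const_case q hq h0
    rcases eq_or_ne (q.coeff 0) 0 with hc0 | hc0
    · obtain ⟨r, rfl⟩ := (Polynomial.X_dvd_iff).2 hc0
      have hr : r ≠ 0 := right_ne_zero_of_mul hq
      have hdeg : (X * r).natDegree = r.natDegree + 1 := by
        rw [Polynomial.natDegree_X_mul hr]
      have hroots : (X * r).roots = {0} + r.roots := by
        rw [Polynomial.roots_mul hq, Polynomial.roots_X]
      have hfilter : ((X * r).roots.filter (· < (0:ℝ))) = r.roots.filter (· < (0:ℝ)) := by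
        rw [hroots, Multiset.filter_add]
        simp [Multiset.filter_singleton]
      have hsupp : (X * r).support = r.support.image (· + 1) := by
        ext m
        simp only [Polynomial.mem_support_iff, Finset.mem_image]
        constructor
        · intro hm
          cases m with
          | zero => simp [Polynomial.mul_coeff_zero] at hm
          | succ k => exact ⟨k, by rwa [Polynomial.coeff_X_mul] at hm, rfl⟩
        · rintro ⟨k, hk, rfl⟩
          rwa [Polynomial.coeff_X_mul]
      rw [hfilter, hsupp, Finset.card_image_of_injective _ (add_left_injective 1)]
      exact ih r (by omega) hr
    · have hq' : derivative q ≠ 0 := by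
        intro h
        exact h0 (by rw [Polynomial.eq_C_of_derivative_eq_zero h]; simp)
      have hlt := Polynomial.natDegree_derivative_lt h0
      have hih := ih (derivative q) (by omega) hq'
      have hrolle := neg_card_roots_le_derivative q
      have hsupp : (derivative q).support.card + 1 ≤ q.support.card := by
        have himg : (derivative q).support.image (· + 1) ⊆ q.support \ {0} := by
          intro m hm
          obtain ⟨k, hk, rfl⟩ := Finset.mem_image.1 hm
          rw [Polynomial.mem_support_derivative] at hk
          exact Finset.mem_sdiff.2 ⟨hk, by simp⟩
        have h1 : (derivative q).support.card ≤ (q.support \ {0}).card := by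
          rw [← Finset.card_image_of_injective _ (add_left_injective 1)]
          exact Finset.card_le_card himg
        have h2 : ({0} : Finset ℕ) ⊆ q.support := by
          simpa using Polynomial.mem_support_iff.2 hc0
        rw [Finset.card_sdiff_of_subset h2, Finset.card_singleton] at h1
        have := Finset.card_le_card h2
        simp at this
        omega
      omega

theorem moment_matrix_invertible (α : ℝ) (hα0 : 0 < α) (hα1 : α ≤ 1) (N n : ℕ)
    (hn : n ≤ 2*N) :
    IsUnit (Matrix.of (fun j k : Fin n =>
      if (j:ℕ) + (k:ℕ) < 2*N
        then ((Polynomial.X + 1)^N * (Polynomial.X + Polynomial.C α)^N).coeff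
              (2*N - 1 - ((j:ℕ) + (k:ℕ)))
        else 0) : Matrix (Fin n) (Fin n) ℝ) := by
  classical
  set p : ℝ[X] := (X + 1)^N * (X + C α)^N with hp
  set M : Matrix (Fin n) (Fin n) ℝ := Matrix.of (fun j k : Fin n =>
      if (j:ℕ) + (k:ℕ) < 2*N then p.coeff (2*N - 1 - ((j:ℕ) + (k:ℕ))) else 0) with hM
  rw [Matrix.isUnit_iff_isUnit_det, isUnit_iff_ne_zero]
  intro hdet
  obtain ⟨v, hv, hMv⟩ := (Matrix.exists_mulVec_eq_zero_iff).2 hdet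
  have hn1 : 1 ≤ n := by
    by_contra h
    have : n = 0 := by omega
    subst this
    exact hv (funext fun k => k.elim0)
  -- basic facts about p
  have hmon1 : ((X : ℝ[X]) + 1).Monic := by
    have := monic_X_add_C (1 : ℝ)
    rwa [map_one] at this
  have hmon2 : ((X : ℝ[X]) + C α).Monic := monic_X_add_C α
  have hpm : p.Monic := (hmon1.pow N).mul (hmon2.pow N)
  have hp0 : p ≠ 0 := hpm.ne_zero
  have hpdeg : p.natDegree = 2*N := by
    rw [hp, natDegree_mul (hmon1.pow N).ne_zero (hmon2.pow N).ne_zero,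
      natDegree_pow, natDegree_pow]
    have h1 : ((X : ℝ[X]) + 1).natDegree = 1 := by
      have := natDegree_X_add_C (1 : ℝ); rwa [map_one] at this
    have h2 : ((X : ℝ[X]) + C α).natDegree = 1 := natDegree_X_add_C α
    rw [h1, h2]; ring
  -- the polynomial x built from the kernel vector
  set x : ℝ[X] := ∑ k : Fin n, C (v k) * X^(k:ℕ) with hx
  have hcoeffx : ∀ i : ℕ, x.coeff i = if h : i < n then v ⟨i, h⟩ else 0 := by
    intro i
    rw [hx, finset_sum_coeff]
    simp only [coeff_C_mul, coeff_X_pow, mul_ite, mul_one, mul_zero]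
    by_cases h : i < n
    · rw [Finset.sum_eq_single (⟨i, h⟩ : Fin n)]
      · simp [h]
      · intro k _ hk
        have : i ≠ (k : ℕ) := fun he => hk (by apply Fin.ext; simp [← he])
        simp [this]
      · simp
    · rw [dif_neg h]
      refine Finset.sum_eq_zero fun k _ => ?_
      have : i ≠ (k : ℕ) := by omega
      simp [this]
  have hx0 : x ≠ 0 := by
    intro h
    apply hv
    funext k
    have := hcoeffx (k : ℕ)
    rw [h, coeff_zero] at this
    simp only [k.isLt, dif_pos, Fin.eta] at this
    exact this.symm
  have hxdeg : x.natDegree ≤ n - 1 := by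
    rw [hx]
    refine natDegree_sum_le_of_forall_le _ _ fun k _ => ?_
    exact (natDegree_C_mul_le _ _).trans (by rw [natDegree_X_pow]; omega)
  -- the product q and its vanishing coefficients
  set q : ℝ[X] := x * p with hq
  have hq0 : q ≠ 0 := mul_ne_zero hx0 hp0
  have hqdeg : q.natDegree ≤ 2*N + n - 1 := by
    rw [hq, natDegree_mul hx0 hp0, hpdeg]; omega
  have hkey : ∀ j : ℕ, j < n → q.coeff (2*N - 1 - j) = 0 := by
    intro j hj
    have hj2 : j < 2*N := by omega
    set m : ℕ := 2*N - 1 - j with hm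
    set f : ℕ → ℝ := fun k => if k ≤ m then x.coeff k * p.coeff (m - k) else 0 with hf
    have h1 : q.coeff m = ∑ k ∈ Finset.range (m+1), f k := by
      rw [hq, coeff_mul, Finset.Nat.sum_antidiagonal_eq_sum_range_succ_mk]
      refine Finset.sum_congr rfl fun k hk => ?_
      rw [Finset.mem_range] at hk
      rw [hf]
      simp only
      rw [if_pos (by omega)]
    have h2 : ∑ k ∈ Finset.range (m+1), f k = ∑ k ∈ Finset.range (2*N + n), f k := by
      refine Finset.sum_subset (Finset.range_subset_range.2 (by omega)) fun k _ hk => ?_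
      rw [Finset.mem_range] at hk
      rw [hf]; simp only
      rw [if_neg (by omega)]
    have h3 : ∑ k ∈ Finset.range (2*N + n), f k = ∑ k ∈ Finset.range n, f k := by
      refine (Finset.sum_subset (Finset.range_subset_range.2 (by omega)) fun k _ hk => ?_).symm
      rw [Finset.mem_range] at hk
      have : x.coeff k = 0 := by rw [hcoeffx k, dif_neg (by omega)]
      rw [hf]; simp only [this, zero_mul, ite_self]
    have h4 : ∑ k ∈ Finset.range n, f k = 0 := by
      have hMvj := congrFun hMv ⟨j, hj⟩
      simp only [Matrix.mulVec, dotProduct, Pi.zero_apply, hM,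
        Matrix.of_apply] at hMvj
      rw [Finset.sum_range fun k => f k, ← hMvj]
      refine Finset.sum_congr rfl fun k _ => ?_
      have hck : x.coeff (k:ℕ) = v k := by
        rw [hcoeffx, dif_pos k.isLt, Fin.eta]
      rw [hf]
      simp only
      by_cases hc : (k:ℕ) ≤ m
      · rw [if_pos hc, if_pos (by omega), hck]
        have hmk : m - (k:ℕ) = 2*N - 1 - ((j:ℕ) + (k:ℕ)) := by omega
        rw [hmk, mul_comm]
      · rw [if_neg hc, if_neg (by omega), zero_mul]
    rw [h1, h2, h3, h4]
  -- support bound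
  have hsupp : q.support ⊆ Finset.range (2*N + n) \ Finset.Ico (2*N - n) (2*N) := by
    intro i hi
    have hne := Polynomial.mem_support_iff.1 hi
    have hile : i ≤ q.natDegree := le_natDegree_of_ne_zero hne
    refine Finset.mem_sdiff.2 ⟨Finset.mem_range.2 (by omega), fun hmem => ?_⟩
    rw [Finset.mem_Ico] at hmem
    have hj : 2*N - 1 - i < n := by omega
    have hcq := hkey (2*N - 1 - i) hj
    have heq : 2*N - 1 - (2*N - 1 - i) = i := by omega
    rw [heq] at hcq
    exact hne hcq
  have hsuppcard : q.support.card ≤ 2*N := by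
    have hsub : Finset.Ico (2*N - n) (2*N) ⊆ Finset.range (2*N + n) := by
      intro a ha; rw [Finset.mem_Ico] at ha; exact Finset.mem_range.2 (by omega)
    have hle := Finset.card_le_card hsupp
    rw [Finset.card_sdiff_of_subset hsub, Nat.card_Ico, Finset.card_range] at hle
    omega
  -- roots bound
  have hroots : (2*N : ℕ) ≤ Multiset.card (q.roots.filter (· < (0:ℝ))) := by
    have h1 : ((X:ℝ[X]) + 1).roots = {-1} := by
      have he : (X:ℝ[X]) + 1 = X - C (-1) := by rw [map_neg, map_one, sub_neg_eq_add]
      rw [he, roots_X_sub_C]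
    have h2 : ((X:ℝ[X]) + C α).roots = {-α} := by
      have he : (X:ℝ[X]) + C α = X - C (-α) := by rw [map_neg, sub_neg_eq_add]
      rw [he, roots_X_sub_C]
    have hproots : p.roots = N • ({-1} : Multiset ℝ) + N • ({-α} : Multiset ℝ) := by
      rw [hp, roots_mul (mul_ne_zero (hmon1.pow N).ne_zero (hmon2.pow N).ne_zero),
        roots_pow, roots_pow, h1, h2]
    have hqroots : q.roots = x.roots + p.roots := by rw [hq, roots_mul hq0]
    have c1 : ((N • ({-1} : Multiset ℝ)).filter (· < (0:ℝ))) = N • ({-1} : Multiset ℝ) := by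
      refine Multiset.filter_eq_self.2 fun a ha => ?_
      rw [Multiset.nsmul_singleton] at ha
      rw [Multiset.eq_of_mem_replicate ha]
      norm_num
    have c2 : ((N • ({-α} : Multiset ℝ)).filter (· < (0:ℝ))) = N • ({-α} : Multiset ℝ) := by
      refine Multiset.filter_eq_self.2 fun a ha => ?_
      rw [Multiset.nsmul_singleton] at ha
      rw [Multiset.eq_of_mem_replicate ha]
      simpa using hα0
    rw [hqroots, hproots, Multiset.filter_add, Multiset.filter_add, c1, c2]
    simp only [Multiset.card_add, Multiset.card_nsmul, Multiset.card_singleton]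
    omega
  have hdesc := descartes_neg q.natDegree q le_rfl hq0
  omega
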